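/- Let g and ḡ be curves on a matrix Lie group satisfying ġ = X_t(g) and d/dt ḡ = X_t(ḡ), where X_t is group-affine: X_t(hg) = h X_t(g) + X_t(h) g − h X_t(e) g for all g, h. Then the right-invariant error h = ḡg⁻¹ satisfies ḣ = X_t(h) − h X_t(e). -/

import Mathlib

open Matrix

attribute [local instance] Matrix.linftyOpNormedRing Matrix.linftyOpNormedAlgebra

/-- If `X_t` is group-affine and `ġ = X_t(g)`, `d/dt ḡ = X_t(ḡ)`, then the
right-invariant error `h = ḡ g⁻¹` satisfies `ḣ = X_t(h) − h X_t(e)`. -/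
theorem right_error_of_group_affine (n : ℕ) (G : Set (Matrix (Fin n) (Fin n) ℝ))
    (hone : (1 : Matrix (Fin n) (Fin n) ℝ) ∈ G)
    (hmul : ∀ a ∈ G, ∀ b ∈ G, a * b ∈ G)
    (hinv : ∀ a ∈ G, a⁻¹ ∈ G)
    (X : ℝ → Matrix (Fin n) (Fin n) ℝ → Matrix (Fin n) (Fin n) ℝ)
    (hGA : ∀ t, ∀ g ∈ G, ∀ h ∈ G,
      X t (h * g) = h * X t g + X t h * g - h * X t 1 * g)
    (g gbar : ℝ → Matrix (Fin n) (Fin n) ℝ)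
    (hgG : ∀ t, g t ∈ G) (hgbarG : ∀ t, gbar t ∈ G)
    (hunit : ∀ t, IsUnit (g t))
    (hdg : ∀ t, HasDerivAt g (X t (g t)) t)
    (hdgbar : ∀ t, HasDerivAt gbar (X t (gbar t)) t) :
    ∀ t, HasDerivAt (fun s => gbar s * (g s)⁻¹)
      (X t (gbar t * (g t)⁻¹) - (gbar t * (g t)⁻¹) * X t 1) t := by
  intro t
  set u := (hunit t).unit
  have hu : (u : Matrix (Fin n) (Fin n) ℝ) = g t := rfl
  -- derivative of s ↦ (g s)⁻¹
  have hinvderiv : HasDerivAt (fun s => (g s)⁻¹)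
      (-((g t)⁻¹ * X t (g t) * (g t)⁻¹)) t := by
    have h1 : HasFDerivAt Ring.inverse
        (-(ContinuousLinearMap.mulLeftRight ℝ _ ↑u⁻¹ ↑u⁻¹)) (g t) :=
      hasFDerivAt_ringInverse u
    have h2 := h1.comp_hasDerivAt t (hdg t)
    simp only [ContinuousLinearMap.neg_apply, ContinuousLinearMap.mulLeftRight_apply] at h2
    have h3 : (fun s => Ring.inverse (g s)) = fun s => (g s)⁻¹ := by
      funext s; rw [Matrix.nonsing_inv_eq_ringInverse]
    rw [Function.comp_def, h3] at h2
    have h4 : ((u⁻¹ : _ˣ) : Matrix (Fin n) (Fin n) ℝ) = (g t)⁻¹ := by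
      rw [Matrix.coe_units_inv, hu]
    rw [h4] at h2
    simp only [mul_assoc] at h2 ⊢
    exact h2
  have hD := (hdgbar t).mul hinvderiv
  refine hD.congr_deriv ?_
  have hGmem := hinv _ (hgG t)
  have key := hGA t (g t) (hgG t) (gbar t * (g t)⁻¹) (hmul _ (hgbarG t) _ hGmem)
  have hcancel : gbar t * (g t)⁻¹ * g t = gbar t := by
    rw [mul_assoc, Matrix.nonsing_inv_mul _ ((Matrix.isUnit_iff_isUnit_det _).mp (hunit t)),
      mul_one]
  have hgi : g t * (g t)⁻¹ = 1 :=
    Matrix.mul_nonsing_inv _ ((Matrix.isUnit_iff_isUnit_det _).mp (hunit t))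
  rw [hcancel] at key
  rw [key]
  simp only [sub_mul, add_mul, mul_assoc, hgi, mul_one, mul_neg]
  rw [show gbar t * ((g t)⁻¹ * (X t (g t) * (g t)⁻¹)) =
      gbar t * (g t)⁻¹ * (X t (g t) * (g t)⁻¹) by rw [mul_assoc]]
  abel
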